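/- arXiv:2102.01622 — 3 statements merged into one kernel-verified Lean document; each statement's English description precedes it below -/
import Mathlib

section
/- The minimum over all operators M with 0 ≤ M ≤ 1 of the error probability ½(1 − tr((ρ₀−ρ₁)M)) equals ½(1 − ½‖ρ₀−ρ₁‖₁), where ‖·‖₁ is the trace norm (Helstrom–Holevo bound). -/
open scoped ComplexOrder

/-- A density matrix: positive semidefinite with unit trace. -/
def IsDensityMatrix {n : ℕ} (ρ : Matrix (Fin n) (Fin n) ℂ) : Prop :=
  ρ.PosSemidef ∧ ρ.trace = 1

/-- The trace norm of a (square complex) matrix: `tr √(AᴴA)`. -/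
noncomputable def traceNorm {n : ℕ} (A : Matrix (Fin n) (Fin n) ℂ) : ℝ :=
  (((Matrix.posSemidef_conjTranspose_mul_self A).1.eigenvectorUnitary : Matrix (Fin n) (Fin n) ℂ) *
    Matrix.diagonal ((fun x : ℝ => (x : ℂ)) ∘ Real.sqrt ∘
      (Matrix.posSemidef_conjTranspose_mul_self A).1.eigenvalues) *
    (star (Matrix.posSemidef_conjTranspose_mul_self A).1.eigenvectorUnitary :
      Matrix (Fin n) (Fin n) ℂ)).trace.re

open Matrix in
/-- Helstrom–Holevo bound: the minimum error probability
`½ (1 − tr((ρ₀−ρ₁)M))` over all POVM elements `0 ≤ M ≤ 1` equals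
`½ (1 − ½‖ρ₀−ρ₁‖₁)`. -/
theorem helstrom_holevo {n : ℕ} (ρ₀ ρ₁ : Matrix (Fin n) (Fin n) ℂ)
    (h₀ : IsDensityMatrix ρ₀) (h₁ : IsDensityMatrix ρ₁) :
    IsLeast {p : ℝ | ∃ M : Matrix (Fin n) (Fin n) ℂ, M.PosSemidef ∧ (1 - M).PosSemidef ∧
        p = (1 / 2) * (1 - ((ρ₀ - ρ₁) * M).trace.re)}
      ((1 / 2) * (1 - (1 / 2) * traceNorm (ρ₀ - ρ₁))) := by
  set Δ : Matrix (Fin n) (Fin n) ℂ := ρ₀ - ρ₁ with hΔdef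
  have hΔ : Δ.IsHermitian := h₀.1.1.sub h₁.1.1
  set U : Matrix (Fin n) (Fin n) ℂ := (hΔ.eigenvectorUnitary : Matrix (Fin n) (Fin n) ℂ) with hUdef
  set μ : Fin n → ℝ := hΔ.eigenvalues with hμdef
  have hU1 : star U * U = 1 := Unitary.coe_star_mul_self hΔ.eigenvectorUnitary
  have hU2 : U * star U = 1 := Unitary.coe_mul_star_self hΔ.eigenvectorUnitary
  have hspec : Δ = U * Matrix.diagonal (fun i => (μ i : ℂ)) * star U := by
    have := hΔ.spectral_theorem
    exact this
  -- conjugation multiplication rule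
  have key_mul : ∀ a b : Fin n → ℝ,
      (U * Matrix.diagonal (fun i => (a i : ℂ)) * star U) *
      (U * Matrix.diagonal (fun i => (b i : ℂ)) * star U)
      = U * Matrix.diagonal (fun i => ((a i * b i : ℝ) : ℂ)) * star U := by
    intro a b
    calc (U * Matrix.diagonal (fun i => (a i : ℂ)) * star U) *
        (U * Matrix.diagonal (fun i => (b i : ℂ)) * star U)
        = U * Matrix.diagonal (fun i => (a i : ℂ)) * (star U * U) *
            Matrix.diagonal (fun i => (b i : ℂ)) * star U := by
          simp only [Matrix.mul_assoc]
      _ = U * (Matrix.diagonal (fun i => (a i : ℂ)) * Matrix.diagonal (fun i => (b i : ℂ))) *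
            star U := by rw [hU1]; simp only [Matrix.mul_assoc, Matrix.mul_one]
      _ = _ := by rw [Matrix.diagonal_mul_diagonal]; push_cast; rfl
  -- trace rule
  have key_trace : ∀ a : Fin n → ℝ,
      (U * Matrix.diagonal (fun i => (a i : ℂ)) * star U).trace = ((∑ i, a i : ℝ) : ℂ) := by
    intro a
    rw [Matrix.trace_mul_cycle, hU1, Matrix.one_mul, Matrix.trace_diagonal]
    push_cast; rfl
  -- sum of eigenvalues is zero
  have hsum0 : ∑ i, μ i = 0 := by
    have h1 : Δ.trace = 0 := by
      rw [hΔdef, Matrix.trace_sub, h₀.2, h₁.2, sub_self]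
    rw [hspec, key_trace] at h1
    exact_mod_cast h1
  -- trace norm equals sum of |eigenvalues|
  have hTN : traceNorm Δ = ∑ i, |μ i| := by
    have habs : (fun i : Fin n => ((|μ i| * |μ i| : ℝ) : ℂ)) = fun i => ((μ i * μ i : ℝ) : ℂ) := by
      funext i; exact congrArg Complex.ofReal (abs_mul_abs_self (μ i))
    have hd : Matrix.PosSemidef (Matrix.diagonal (fun i : Fin n => ((|μ i| : ℝ) : ℂ))) :=
      Matrix.PosSemidef.diagonal fun i => Complex.zero_le_real.mpr (abs_nonneg (μ i))
    have hS : (U * Matrix.diagonal (fun i => ((|μ i| : ℝ) : ℂ)) * star U).PosSemidef := by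
      have := hd.mul_mul_conjTranspose_same U
      rwa [← Matrix.star_eq_conjTranspose] at this
    have hSsq : (U * Matrix.diagonal (fun i => ((|μ i| : ℝ) : ℂ)) * star U) ^ 2 = Δᴴ * Δ := by
      rw [pow_two, key_mul, hΔ.eq, hspec, key_mul, habs]
    open scoped MatrixOrder in
    have heq : (((Matrix.posSemidef_conjTranspose_mul_self Δ).1.eigenvectorUnitary : Matrix (Fin n) (Fin n) ℂ) *
      Matrix.diagonal ((fun x : ℝ => (x : ℂ)) ∘ Real.sqrt ∘
        (Matrix.posSemidef_conjTranspose_mul_self Δ).1.eigenvalues) *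
      (star (Matrix.posSemidef_conjTranspose_mul_self Δ).1.eigenvectorUnitary :
        Matrix (Fin n) (Fin n) ℂ)) = U * Matrix.diagonal (fun i => ((|μ i| : ℝ) : ℂ)) * star U := by
      have h0 := (Matrix.posSemidef_conjTranspose_mul_self Δ).nonneg
      rw [← CFC.sqrt_unique (a := Δᴴ * Δ) (b := U * Matrix.diagonal (fun i => ((|μ i| : ℝ) : ℂ)) * star U)
        (by rw [← hSsq, pow_two]) hS.nonneg,
        CFC.sqrt_eq_real_sqrt _ h0, cfcₙ_eq_cfc (hf0 := Real.sqrt_zero), (Matrix.posSemidef_conjTranspose_mul_self Δ).1.cfc_eq]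
      rfl
    rw [traceNorm, heq, key_trace]
    simp
  -- half sum identity
  have hhalf : ∑ i, max (μ i) 0 = (1 / 2) * ∑ i, |μ i| := by
    have : ∀ i, max (μ i) 0 = (μ i + |μ i|) / 2 := fun i => by
      rcases le_or_gt 0 (μ i) with h | h
      · rw [max_eq_left h, abs_of_nonneg h]; ring
      · rw [max_eq_right h.le, abs_of_neg h]; ring
    rw [Finset.sum_congr rfl (fun i _ => this i), ← Finset.sum_div,
      Finset.sum_add_distrib, hsum0, zero_add]
    ring
  constructor
  · -- membership: optimal M
    set ind : Fin n → ℝ := fun i => if 0 ≤ μ i then 1 else 0 with hinddef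
    refine ⟨U * Matrix.diagonal (fun i => ((ind i : ℝ) : ℂ)) * star U, ?_, ?_, ?_⟩
    · have hd2 : Matrix.PosSemidef (Matrix.diagonal (fun i => ((ind i : ℝ) : ℂ))) :=
        Matrix.PosSemidef.diagonal fun i => Complex.zero_le_real.mpr (by
          simp only [hinddef]; split <;> norm_num)
      have := hd2.mul_mul_conjTranspose_same U
      rwa [← Matrix.star_eq_conjTranspose] at this
    · have h1 : (1 : Matrix (Fin n) (Fin n) ℂ)
          = U * Matrix.diagonal (fun i => ((1 : ℝ) : ℂ)) * star U := by
        simp [Matrix.diagonal_one, hU2]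
      have : (1 : Matrix (Fin n) (Fin n) ℂ) - U * Matrix.diagonal (fun i => ((ind i : ℝ) : ℂ)) * star U
          = U * Matrix.diagonal (fun i => ((1 - ind i : ℝ) : ℂ)) * star U := by
        rw [h1, ← Matrix.sub_mul, ← Matrix.mul_sub, Matrix.diagonal_sub]
        push_cast; rfl
      rw [this]
      have hd2 : Matrix.PosSemidef (Matrix.diagonal (fun i => ((1 - ind i : ℝ) : ℂ))) :=
        Matrix.PosSemidef.diagonal fun i => Complex.zero_le_real.mpr (by
          simp only [hinddef]; split <;> norm_num)
      have := hd2.mul_mul_conjTranspose_same U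
      rwa [← Matrix.star_eq_conjTranspose] at this
    · rw [hTN, hspec, key_mul, key_trace]
      have : ∑ i, μ i * ind i = ∑ i, max (μ i) 0 := by
        refine Finset.sum_congr rfl fun i _ => ?_
        simp only [hinddef]
        split <;> rename_i h
        · rw [mul_one, max_eq_left h]
        · rw [mul_zero, max_eq_right (le_of_not_ge h)]
      rw [Complex.ofReal_re, this, hhalf]
  · -- lower bound
    rintro p ⟨M, hM, hM1, rfl⟩
    have hub : (Δ * M).trace.re ≤ (1 / 2) * traceNorm Δ := by
      set N : Matrix (Fin n) (Fin n) ℂ := star U * M * U with hNdef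
      have htr : (Δ * M).trace = (Matrix.diagonal (fun i => (μ i : ℂ)) * N).trace := by
        rw [hspec]
        calc (U * Matrix.diagonal (fun i => (μ i : ℂ)) * star U * M).trace
            = ((U * Matrix.diagonal (fun i => (μ i : ℂ))) * (star U * M)).trace := by
              rw [Matrix.mul_assoc]
          _ = ((star U * M) * (U * Matrix.diagonal (fun i => (μ i : ℂ)))).trace :=
              Matrix.trace_mul_comm _ _
          _ = ((star U * M * U) * Matrix.diagonal (fun i => (μ i : ℂ))).trace := by
              rw [← Matrix.mul_assoc]
          _ = (Matrix.diagonal (fun i => (μ i : ℂ)) * (star U * M * U)).trace :=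
              Matrix.trace_mul_comm _ _
      have hN : N.PosSemidef := by
        have := hM.conjTranspose_mul_mul_same U
        rwa [← Matrix.star_eq_conjTranspose] at this
      have hN1 : (1 - N).PosSemidef := by
        have h := hM1.conjTranspose_mul_mul_same U
        rw [← Matrix.star_eq_conjTranspose] at h
        have he : star U * (1 - M) * U = 1 - N := by
          rw [Matrix.mul_sub, Matrix.mul_one, Matrix.sub_mul, hU1, hNdef]
        rwa [he] at h
      have hdiag0 : ∀ i, 0 ≤ (N i i).re := by
        intro i
        have := hN.re_dotProduct_nonneg (Pi.single i 1)
        simpa [dotProduct, Matrix.mulVec, Pi.single_apply] using this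
      have hdiag1 : ∀ i, (N i i).re ≤ 1 := by
        intro i
        have := hN1.re_dotProduct_nonneg (Pi.single i 1)
        simp [dotProduct, Matrix.mulVec, Pi.single_apply, Matrix.sub_apply,
          Matrix.one_apply] at this
        linarith
      have htr2 : (Matrix.diagonal (fun i => (μ i : ℂ)) * N).trace.re
          = ∑ i, μ i * (N i i).re := by
        rw [Matrix.trace]
        rw [Complex.re_sum]
        refine Finset.sum_congr rfl fun i _ => ?_
        simp [Matrix.diag, Matrix.mul_apply, Matrix.diagonal_apply]
      rw [htr, htr2, hTN, ← hhalf]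
      refine Finset.sum_le_sum fun i _ => ?_
      rcases le_or_gt 0 (μ i) with h | h
      · calc μ i * (N i i).re ≤ μ i * 1 := by
              have := hdiag1 i; nlinarith [hdiag0 i]
          _ = μ i := mul_one _
          _ ≤ max (μ i) 0 := le_max_left _ _
      · calc μ i * (N i i).re ≤ 0 := mul_nonpos_of_nonpos_of_nonneg h.le (hdiag0 i)
          _ ≤ max (μ i) 0 := le_max_right _ _
    linarith [hub]
end

section
/- Let W₀ and W₁ be probability density functions on ℝ² given by two-dimensional Gaussians with identity-times-½ covariance (variance ½ in each coordinate), centered at (√2·α, 0) and (−√2·α, 0) respectively, with α > 0. Then ½·∫|W₀ − W₁| = erf(α√2), where erf(x) = (2/√π)∫₀ˣ e^{−t²} dt. -/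
open MeasureTheory

/-- The error function `erf(x) = (2/√π) ∫₀ˣ e^{−t²} dt`. -/
noncomputable def erf (x : ℝ) : ℝ :=
  (2 / Real.sqrt Real.pi) * ∫ t in (0:ℝ)..x, Real.exp (-t ^ 2)

/-- The Wigner function of the coherent state `|α⟩` (real `α`):
a Gaussian density on ℝ² of variance ½ per coordinate centered at `(√2 α, 0)`. -/
noncomputable def Wcoh (α : ℝ) (z : ℝ × ℝ) : ℝ :=
  (1 / Real.pi) * Real.exp (-(z.1 - Real.sqrt 2 * α) ^ 2 - z.2 ^ 2)

private lemma shift_set (f : ℝ → ℝ) (s : Set ℝ) (c : ℝ) :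
    ∫ x in (fun x => x - c) ⁻¹' s, f (x - c) = ∫ x in s, f x :=
  (measurePreserving_sub_right volume c).setIntegral_preimage_emb
    (MeasurableEquiv.subRight c).measurableEmbedding f s

private lemma shift_Ioi (a c : ℝ) :
    ∫ x in Set.Ioi a, Real.exp (-(x - c) ^ 2) = ∫ x in Set.Ioi (a - c), Real.exp (-x ^ 2) := by
  have := shift_set (fun x => Real.exp (-x ^ 2)) (Set.Ioi (a - c)) c
  rwa [Set.preimage_sub_const_Ioi, sub_add_cancel] at this

private lemma shift_Iic (a c : ℝ) :
    ∫ x in Set.Iic a, Real.exp (-(x - c) ^ 2) = ∫ x in Set.Iic (a - c), Real.exp (-x ^ 2) := by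
  have := shift_set (fun x => Real.exp (-x ^ 2)) (Set.Iic (a - c)) c
  rwa [Set.preimage_sub_const_Iic, sub_add_cancel] at this

private lemma gauss_integrable : Integrable (fun x : ℝ => Real.exp (-x ^ 2)) := by
  simpa using integrable_exp_neg_mul_sq (b := 1) one_pos

private lemma gauss_shift_integrable (c : ℝ) :
    Integrable (fun x : ℝ => Real.exp (-(x - c) ^ 2)) := by
  simpa [sub_eq_add_neg] using gauss_integrable.comp_add_right (-c)

private lemma gauss_total : ∫ x : ℝ, Real.exp (-x ^ 2) = Real.sqrt Real.pi := by
  simpa using integral_gaussian 1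

private lemma gauss_Ioi0 : ∫ x in Set.Ioi (0:ℝ), Real.exp (-x ^ 2) = Real.sqrt Real.pi / 2 := by
  simpa using integral_gaussian_Ioi 1

/-- `½ ∫ |W₀ − W₁| = erf(α√2)` for the Wigner functions of `|±α⟩`, `α > 0`. -/
theorem half_L1_wigner_coherent (α : ℝ) (hα : 0 < α) :
    (1 / 2) * ∫ z : ℝ × ℝ, |Wcoh α z - Wcoh (-α) z| = erf (α * Real.sqrt 2) := by
  set c : ℝ := Real.sqrt 2 * α with hc
  have hc0 : 0 < c := mul_pos (Real.sqrt_pos.2 two_pos) hα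
  have hπ : (0:ℝ) < Real.pi := Real.pi_pos
  -- Factor the integrand.
  have hfact : ∀ z : ℝ × ℝ, |Wcoh α z - Wcoh (-α) z| =
      (|Real.exp (-(z.1 - c) ^ 2) - Real.exp (-(z.1 + c) ^ 2)|) *
        ((1 / Real.pi) * Real.exp (-z.2 ^ 2)) := by
    intro z
    have h1 : Real.sqrt 2 * (-α) = -c := by ring
    simp only [Wcoh, h1, sub_neg_eq_add]
    rw [show -(z.1 - c) ^ 2 - z.2 ^ 2 = (-(z.1 - c) ^ 2) + (-z.2 ^ 2) by ring,
      show -(z.1 + c) ^ 2 - z.2 ^ 2 = (-(z.1 + c) ^ 2) + (-z.2 ^ 2) by ring,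
      Real.exp_add, Real.exp_add]
    rw [show 1 / Real.pi * (Real.exp (-(z.1 - c) ^ 2) * Real.exp (-z.2 ^ 2)) -
        1 / Real.pi * (Real.exp (-(z.1 + c) ^ 2) * Real.exp (-z.2 ^ 2)) =
        (Real.exp (-(z.1 - c) ^ 2) - Real.exp (-(z.1 + c) ^ 2)) *
          (1 / Real.pi * Real.exp (-z.2 ^ 2)) by ring, abs_mul,
      abs_of_pos (show (0:ℝ) < 1 / Real.pi * Real.exp (-z.2 ^ 2) by positivity)]
  simp_rw [hfact]
  rw [Measure.volume_eq_prod, integral_prod_mul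
    (f := fun x : ℝ => |Real.exp (-(x - c) ^ 2) - Real.exp (-(x + c) ^ 2)|)
    (g := fun y : ℝ => 1 / Real.pi * Real.exp (-y ^ 2))]
  -- The `p` integral.
  have hp : (∫ y : ℝ, (1 / Real.pi) * Real.exp (-y ^ 2)) = 1 / Real.sqrt Real.pi := by
    rw [integral_const_mul, gauss_total]
    have h := Real.mul_self_sqrt hπ.le
    have hs : (0:ℝ) < Real.sqrt Real.pi := Real.sqrt_pos.2 hπ
    field_simp
    nlinarith [h]
  rw [hp]
  -- The `x` integral.
  have hF : Integrable (fun x : ℝ => Real.exp (-(x - c) ^ 2)) := gauss_shift_integrable c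
  have hG : Integrable (fun x : ℝ => Real.exp (-(x + c) ^ 2)) := by
    simpa [sub_neg_eq_add] using gauss_shift_integrable (-c)
  have habs : Integrable (fun x : ℝ =>
      |Real.exp (-(x - c) ^ 2) - Real.exp (-(x + c) ^ 2)|) := (hF.sub hG).abs
  have hx : (∫ x : ℝ, |Real.exp (-(x - c) ^ 2) - Real.exp (-(x + c) ^ 2)|) =
      4 * ∫ t in Set.Ioc (0:ℝ) c, Real.exp (-t ^ 2) := by
    rw [← intervalIntegral.integral_Iic_add_Ioi (b := (0:ℝ)) habs.integrableOn habs.integrableOn]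
    have hIoi : (∫ x in Set.Ioi (0:ℝ),
        |Real.exp (-(x - c) ^ 2) - Real.exp (-(x + c) ^ 2)|) =
        (∫ x in Set.Ioi (-c), Real.exp (-x ^ 2)) - ∫ x in Set.Ioi c, Real.exp (-x ^ 2) := by
      rw [setIntegral_congr_fun measurableSet_Ioi (g := fun x =>
          Real.exp (-(x - c) ^ 2) - Real.exp (-(x + c) ^ 2)) ?_]
      · rw [integral_sub hF.integrableOn hG.integrableOn]
        have h2 : (∫ x in Set.Ioi (0:ℝ), Real.exp (-(x + c) ^ 2)) =
            ∫ x in Set.Ioi c, Real.exp (-x ^ 2) := by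
          have := shift_Ioi 0 (-c)
          simpa [sub_neg_eq_add] using this
        rw [shift_Ioi, zero_sub, h2]
      · intro x hx
        dsimp only
        rw [abs_of_nonneg]
        have : (x - c) ^ 2 ≤ (x + c) ^ 2 := by nlinarith [Set.mem_Ioi.1 hx]
        have := Real.exp_le_exp.2 (neg_le_neg this)
        linarith
    have hIic : (∫ x in Set.Iic (0:ℝ),
        |Real.exp (-(x - c) ^ 2) - Real.exp (-(x + c) ^ 2)|) =
        (∫ x in Set.Iic c, Real.exp (-x ^ 2)) - ∫ x in Set.Iic (-c), Real.exp (-x ^ 2) := by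
      rw [setIntegral_congr_fun measurableSet_Iic (g := fun x =>
          Real.exp (-(x + c) ^ 2) - Real.exp (-(x - c) ^ 2)) ?_]
      · rw [integral_sub hG.integrableOn hF.integrableOn]
        have h2 : (∫ x in Set.Iic (0:ℝ), Real.exp (-(x + c) ^ 2)) =
            ∫ x in Set.Iic c, Real.exp (-x ^ 2) := by
          have := shift_Iic 0 (-c)
          simpa [sub_neg_eq_add] using this
        rw [shift_Iic, zero_sub, h2]
      · intro x hx
        dsimp only
        rw [abs_sub_comm, abs_of_nonneg]
        have : (x + c) ^ 2 ≤ (x - c) ^ 2 := by nlinarith [Set.mem_Iic.1 hx]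
        have := Real.exp_le_exp.2 (neg_le_neg this)
        linarith
    rw [hIoi, hIic]
    -- Evenness: ∫ Iic (-c) = ∫ Ioi c and ∫ Iic c = total - ∫ Ioi c, etc.
    have heven : ∀ a : ℝ, (∫ x in Set.Iic (-a), Real.exp (-x ^ 2)) =
        ∫ x in Set.Ioi a, Real.exp (-x ^ 2) := by
      intro a
      have hmp : MeasurePreserving (fun x : ℝ => -x) volume volume :=
        Measure.measurePreserving_neg volume
      have := hmp.setIntegral_preimage_emb (MeasurableEquiv.neg ℝ).measurableEmbedding
        (fun x => Real.exp (-x ^ 2)) (Set.Iic (-a))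
      have hpre : (fun x : ℝ => -x) ⁻¹' Set.Iic (-a) = Set.Ici a := by
        ext x; simp
      rw [hpre] at this
      rw [← this]
      rw [integral_Ici_eq_integral_Ioi]
      exact setIntegral_congr_fun measurableSet_Ioi (fun x _ => by ring_nf)
    have htot : ∀ a : ℝ, (∫ x in Set.Iic a, Real.exp (-x ^ 2)) +
        (∫ x in Set.Ioi a, Real.exp (-x ^ 2)) = Real.sqrt Real.pi := by
      intro a
      rw [intervalIntegral.integral_Iic_add_Ioi gauss_integrable.integrableOn
        gauss_integrable.integrableOn, gauss_total]
    have hsplit : (∫ t in Set.Ioc (0:ℝ) c, Real.exp (-t ^ 2)) +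
        (∫ x in Set.Ioi c, Real.exp (-x ^ 2)) = Real.sqrt Real.pi / 2 := by
      rw [← gauss_Ioi0, ← setIntegral_union (Set.Ioc_disjoint_Ioi le_rfl)
        measurableSet_Ioi gauss_integrable.integrableOn gauss_integrable.integrableOn,
        Set.Ioc_union_Ioi_eq_Ioi hc0.le]
    have e1 := heven c
    have e2 := htot c
    have e3 := htot (-c)
    linarith
  rw [hx]
  -- Put everything together.
  rw [erf, show α * Real.sqrt 2 = c by rw [hc]; ring,
    intervalIntegral.integral_of_le hc0.le]
  have hs : (0:ℝ) < Real.sqrt Real.pi := Real.sqrt_pos.2 hπ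
  field_simp
  ring
end

section
/- For every E > 0, the strict inequality ln(1 + 2E) < (E+1)·ln(E+1) − E·ln(E) holds, i.e., twice the Shannon AWGN capacity ½ln(1+2E) is strictly less than the Gaussian capacity g(E) = (E+1)ln(E+1) − E ln E. -/
/-- For every `E > 0`: `ln(1+2E) < (E+1)ln(E+1) − E ln E`, i.e. twice the
Shannon AWGN capacity `½ ln(1+2E)` is strictly below the Gaussian
capacity `g(E)`. -/
theorem awgn_lt_gaussian_capacity (E : ℝ) (hE : 0 < E) :
    Real.log (1 + 2 * E) < (E + 1) * Real.log (E + 1) - E * Real.log E := by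
  have hE1 : (0:ℝ) < E + 1 := by linarith
  have h2E : (0:ℝ) < 1 + 2 * E := by linarith
  -- Step 1: log(1+2E) - log(E+1) < E/(E+1)
  have hne1 : (1 + 2 * E) / (E + 1) ≠ 1 := by
    intro h
    have : 1 + 2 * E = E + 1 := by
      field_simp at h; linarith
    linarith
  have h1 : Real.log (1 + 2 * E) - Real.log (E + 1) < E / (E + 1) := by
    rw [← Real.log_div (by linarith) (by linarith)]
    have h := Real.log_lt_sub_one_of_pos (by positivity) hne1
    have hx : (1 + 2 * E) / (E + 1) - 1 = E / (E + 1) := by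
      field_simp; ring
    linarith [hx ▸ h]
  -- Step 2: E/(E+1) < E * (log(E+1) - log E)
  have hne2 : E / (E + 1) ≠ 1 := by
    intro h
    have : E = E + 1 := by field_simp at h; exact h
    linarith
  have h2 : E / (E + 1) < E * (Real.log (E + 1) - Real.log E) := by
    have h := Real.log_lt_sub_one_of_pos (x := E / (E + 1)) (by positivity) hne2
    rw [Real.log_div (ne_of_gt hE) (by linarith)] at h
    have hx : E / (E + 1) - 1 = -(1 / (E + 1)) := by field_simp; ring
    rw [hx] at h
    -- h : log E - log (E+1) < -(1/(E+1)), so 1/(E+1) < log(E+1) - log E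
    have h3 : 1 / (E + 1) < Real.log (E + 1) - Real.log E := by linarith
    have := mul_lt_mul_of_pos_left h3 hE
    calc E / (E + 1) = E * (1 / (E + 1)) := by ring
      _ < E * (Real.log (E + 1) - Real.log E) := this
  nlinarith [h1, h2]
end
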